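/- Sequential composition of metric uncertainty relations: if {U^{(1)}_{k₁}} on A₁⊗B₁ satisfies a (t₁, ε₁)-metric uncertainty relation on A₁, and {U^{(2)}_{k₂}} on B₁ = A₂⊗B₂ satisfies a (t₂, ε₂)-metric uncertainty relation on A₂, then the family {(1_{A₁} ⊗ U^{(2)}_{k₂})·U^{(1)}_{k₁}} of t₁t₂ unitaries satisfies a (t₁t₂, ε₁+ε₂)-metric uncertainty relation on A₁⊗A₂. -/

import Mathlib

open scoped BigOperators Kronecker
open Matrix

private lemma sum_normSq_mulVec {n : Type*} [Fintype n] [DecidableEq n]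
    (U : Matrix n n ℂ) (hU : U ∈ Matrix.unitaryGroup n ℂ) (v : n → ℂ) :
    ∑ i, ‖U.mulVec v i‖ ^ 2 = ∑ i, ‖v i‖ ^ 2 := by
  have key : ∀ w : n → ℂ, ∑ i, ‖w i‖ ^ 2 = (star w ⬝ᵥ w).re := by
    intro w
    rw [dotProduct, Complex.re_sum]
    refine Finset.sum_congr rfl fun i _ => ?_
    simp only [Pi.star_apply, Complex.star_def, Complex.mul_re, Complex.conj_re,
      Complex.conj_im, ← Complex.normSq_eq_norm_sq, Complex.normSq_apply]
    ring
  rw [key, key]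
  congr 1
  have h1 : Uᴴ * U = 1 := by
    have := hU.1
    rwa [Matrix.star_eq_conjTranspose] at this
  calc star (U.mulVec v) ⬝ᵥ U.mulVec v
      = (star v ᵥ* Uᴴ) ⬝ᵥ U.mulVec v := by rw [Matrix.star_mulVec]
    _ = ((star v ᵥ* Uᴴ) ᵥ* U) ⬝ᵥ v := by rw [Matrix.dotProduct_mulVec]
    _ = (star v ᵥ* (Uᴴ * U)) ⬝ᵥ v := by rw [Matrix.vecMul_vecMul]
    _ = star v ⬝ᵥ v := by rw [h1, Matrix.vecMul_one]

private lemma kron_mulVec {dA1 dA2 dB2 : ℕ}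
    (U2 : Matrix (Fin dA2 × Fin dB2) (Fin dA2 × Fin dB2) ℂ)
    (w : Fin dA1 × (Fin dA2 × Fin dB2) → ℂ) (a1 : Fin dA1) (a2 : Fin dA2) (b2 : Fin dB2) :
    ((1 : Matrix (Fin dA1) (Fin dA1) ℂ) ⊗ₖ U2).mulVec w (a1, (a2, b2))
      = U2.mulVec (fun b1 => w (a1, b1)) (a2, b2) := by
  simp [Matrix.mulVec, dotProduct, Fintype.sum_prod_type, Matrix.one_apply,
    ite_mul, Finset.sum_ite_eq]

private lemma murC {d e t : ℕ} (U : Fin t → Matrix (Fin d × Fin e) (Fin d × Fin e) ℂ)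
    (ε : ℝ)
    (hMUR : ∀ ψ : EuclideanSpace ℂ (Fin d × Fin e), ‖ψ‖ = 1 →
      (1 / (t : ℝ)) * ∑ k, (1 / 2) * ∑ a : Fin d,
        |(∑ b : Fin e, ‖(U k).mulVec ψ (a, b)‖ ^ 2) - 1 / (d : ℝ)| ≤ ε)
    (v : Fin d × Fin e → ℂ) :
    (1 / (t : ℝ)) * ∑ k, (1 / 2) * ∑ a : Fin d,
      |(∑ b : Fin e, ‖(U k).mulVec v (a, b)‖ ^ 2) - (∑ i, ‖v i‖ ^ 2) / (d : ℝ)|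
      ≤ ε * ∑ i, ‖v i‖ ^ 2 := by
  set c2 : ℝ := ∑ i, ‖v i‖ ^ 2 with hc2
  have hc2nn : 0 ≤ c2 := Finset.sum_nonneg fun i _ => sq_nonneg _
  rcases eq_or_lt_of_le hc2nn with h0 | hpos
  · have hv : v = 0 := by
      funext i
      have := (Finset.sum_eq_zero_iff_of_nonneg (fun i _ => sq_nonneg ‖v i‖)).mp h0.symm
        i (Finset.mem_univ i)
      simpa using this
    subst hv
    simp [Matrix.mulVec_zero, ← h0]
  · set c : ℝ := Real.sqrt c2 with hc
    have hcpos : 0 < c := Real.sqrt_pos.mpr hpos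
    have hcsq : c ^ 2 = c2 := Real.sq_sqrt hc2nn
    set ψ : EuclideanSpace ℂ (Fin d × Fin e) :=
      ((c : ℂ))⁻¹ • (WithLp.toLp 2 v : EuclideanSpace ℂ (Fin d × Fin e)) with hψ
    have hψi : ∀ i, ψ i = ((c : ℂ))⁻¹ * v i := fun i => rfl
    have hnormsq : ∀ i, ‖ψ i‖ ^ 2 = c2⁻¹ * ‖v i‖ ^ 2 := by
      intro i
      rw [hψi, norm_mul, mul_pow, norm_inv, Complex.norm_real, Real.norm_eq_abs,
        abs_of_pos hcpos, inv_pow, hcsq]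
    have hψnorm : ‖ψ‖ = 1 := by
      rw [EuclideanSpace.norm_eq]
      have : ∑ i, ‖ψ i‖ ^ 2 = 1 := by
        simp only [hnormsq, ← Finset.mul_sum, ← hc2]
        field_simp
      rw [this, Real.sqrt_one]
    have hUψ : ∀ k a b, ‖(U k).mulVec ψ (a, b)‖ ^ 2
        = c2⁻¹ * ‖(U k).mulVec v (a, b)‖ ^ 2 := by
      intro k a b
      have : (U k).mulVec ψ = ((c : ℂ))⁻¹ • (U k).mulVec v := by
        rw [hψ]; exact Matrix.mulVec_smul _ _ _
      rw [this]
      simp only [Pi.smul_apply, smul_eq_mul, norm_mul, mul_pow, norm_inv,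
        Complex.norm_real, Real.norm_eq_abs, abs_of_pos hcpos, inv_pow, hcsq]
    have key : (1 / (t : ℝ)) * ∑ k, (1 / 2) * ∑ a : Fin d,
        |(∑ b : Fin e, ‖(U k).mulVec ψ (a, b)‖ ^ 2) - 1 / (d : ℝ)|
        = c2⁻¹ * ((1 / (t : ℝ)) * ∑ k, (1 / 2) * ∑ a : Fin d,
        |(∑ b : Fin e, ‖(U k).mulVec v (a, b)‖ ^ 2) - c2 / (d : ℝ)|) := by
      have inner : ∀ k a, |(∑ b : Fin e, ‖(U k).mulVec ψ (a, b)‖ ^ 2) - 1 / (d : ℝ)|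
          = c2⁻¹ * |(∑ b : Fin e, ‖(U k).mulVec v (a, b)‖ ^ 2) - c2 / (d : ℝ)| := by
        intro k a
        rw [← abs_of_nonneg (inv_nonneg.mpr hc2nn), ← abs_mul]
        congr 1
        simp only [hUψ, ← Finset.mul_sum]
        field_simp
      simp only [inner, ← Finset.mul_sum]
      ring
    have h := hMUR ψ hψnorm
    rw [key] at h
    have h2 := (inv_mul_le_iff₀ hpos).mp h
    linarith

/-- (Sequential composition) If `{U¹_{k₁}}` on `A₁⊗B₁` satisfies a
`(t₁, ε₁)`-metric uncertainty relation on `A₁`, and `{U²_{k₂}}` on `B₁ = A₂⊗B₂`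
satisfies a `(t₂, ε₂)`-metric uncertainty relation on `A₂`, then the family
`{(1_{A₁} ⊗ U²_{k₂})·U¹_{k₁}}` of `t₁t₂` unitaries satisfies a
`(t₁t₂, ε₁+ε₂)`-metric uncertainty relation on `A₁ ⊗ A₂`. -/
theorem stmt10 (dA1 dA2 dB2 t1 t2 : ℕ)
    (hA1 : 0 < dA1) (hA2 : 0 < dA2) (hB2 : 0 < dB2) (ht1 : 0 < t1) (ht2 : 0 < t2)
    (ε1 ε2 : ℝ) (hε1 : 0 ≤ ε1) (hε2 : 0 ≤ ε2)
    (U1 : Fin t1 → Matrix (Fin dA1 × (Fin dA2 × Fin dB2))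
                          (Fin dA1 × (Fin dA2 × Fin dB2)) ℂ)
    (U2 : Fin t2 → Matrix (Fin dA2 × Fin dB2) (Fin dA2 × Fin dB2) ℂ)
    (hU1 : ∀ k, U1 k ∈ Matrix.unitaryGroup (Fin dA1 × (Fin dA2 × Fin dB2)) ℂ)
    (hU2 : ∀ k, U2 k ∈ Matrix.unitaryGroup (Fin dA2 × Fin dB2) ℂ)
    (hMUR1 : ∀ ψ : EuclideanSpace ℂ (Fin dA1 × (Fin dA2 × Fin dB2)), ‖ψ‖ = 1 →
      (1 / (t1 : ℝ)) * ∑ k1, (1 / 2) * ∑ a1 : Fin dA1,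
          |(∑ b1 : Fin dA2 × Fin dB2, ‖(U1 k1).mulVec ψ (a1, b1)‖ ^ 2)
            - 1 / (dA1 : ℝ)| ≤ ε1)
    (hMUR2 : ∀ ψ : EuclideanSpace ℂ (Fin dA2 × Fin dB2), ‖ψ‖ = 1 →
      (1 / (t2 : ℝ)) * ∑ k2, (1 / 2) * ∑ a2 : Fin dA2,
          |(∑ b2 : Fin dB2, ‖(U2 k2).mulVec ψ (a2, b2)‖ ^ 2) - 1 / (dA2 : ℝ)| ≤ ε2) :
    ∀ ψ : EuclideanSpace ℂ (Fin dA1 × (Fin dA2 × Fin dB2)), ‖ψ‖ = 1 →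
      (1 / ((t1 : ℝ) * t2)) * ∑ k1, ∑ k2, (1 / 2) *
          ∑ a1 : Fin dA1, ∑ a2 : Fin dA2,
            |(∑ b2 : Fin dB2,
                ‖(((1 : Matrix (Fin dA1) (Fin dA1) ℂ) ⊗ₖ U2 k2) * U1 k1).mulVec ψ
                    (a1, (a2, b2))‖ ^ 2)
              - 1 / ((dA1 : ℝ) * dA2)| ≤ ε1 + ε2 := by
  intro ψ hψ
  have ht1' : (0 : ℝ) < t1 := by exact_mod_cast ht1
  have ht2' : (0 : ℝ) < t2 := by exact_mod_cast ht2
  have hA1' : (0 : ℝ) < dA1 := by exact_mod_cast hA1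
  have hA2' : (0 : ℝ) < dA2 := by exact_mod_cast hA2
  -- the slice vectors
  set v : Fin t1 → Fin dA1 → (Fin dA2 × Fin dB2) → ℂ :=
    fun k1 a1 b1 => (U1 k1).mulVec ψ (a1, b1) with hv
  set q : Fin t1 → Fin dA1 → ℝ := fun k1 a1 => ∑ b1, ‖v k1 a1 b1‖ ^ 2 with hq
  set P : Fin t1 → Fin t2 → Fin dA1 → Fin dA2 → ℝ :=
    fun k1 k2 a1 a2 => ∑ b2, ‖(U2 k2).mulVec (v k1 a1) (a2, b2)‖ ^ 2 with hP
  -- rewrite the goal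
  have hrw : ∀ k1 k2 a1 a2, (∑ b2 : Fin dB2,
      ‖(((1 : Matrix (Fin dA1) (Fin dA1) ℂ) ⊗ₖ U2 k2) * U1 k1).mulVec ψ
        (a1, (a2, b2))‖ ^ 2) = P k1 k2 a1 a2 := by
    intro k1 k2 a1 a2
    refine Finset.sum_congr rfl fun b2 _ => ?_
    rw [← Matrix.mulVec_mulVec, kron_mulVec]
  simp only [hrw]
  -- norm of ψ squared sums to 1
  have hψ2 : ∑ i, ‖ψ i‖ ^ 2 = 1 := by
    have h := EuclideanSpace.norm_eq ψ
    rw [hψ] at h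
    have h' := Real.sqrt_eq_one.mp h.symm
    exact h'
  have hqsum : ∀ k1, ∑ a1, q k1 a1 = 1 := by
    intro k1
    have h1 : ∑ i : Fin dA1 × (Fin dA2 × Fin dB2), ‖(U1 k1).mulVec ψ i‖ ^ 2 = 1 := by
      rw [sum_normSq_mulVec _ (hU1 k1) ψ]; exact hψ2
    rw [hq]
    simp only [hv]
    exact (Fintype.sum_prod_type
      (f := fun i : Fin dA1 × (Fin dA2 × Fin dB2) => ‖(U1 k1).mulVec ψ i‖ ^ 2)).symm.trans h1
  -- per-k1 bound
  have step : ∀ k1, (1 / (t2 : ℝ)) * ∑ k2, (1 / 2) * ∑ a1, ∑ a2,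
      |P k1 k2 a1 a2 - 1 / ((dA1 : ℝ) * dA2)|
      ≤ ε2 + (1 / 2) * ∑ a1, |q k1 a1 - 1 / (dA1 : ℝ)| := by
    intro k1
    -- triangle inequality per k2
    have tri : ∀ k2, (1 / 2 : ℝ) * ∑ a1, ∑ a2, |P k1 k2 a1 a2 - 1 / ((dA1 : ℝ) * dA2)|
        ≤ ((1 / 2) * ∑ a1, ∑ a2, |P k1 k2 a1 a2 - q k1 a1 / (dA2 : ℝ)|)
          + (1 / 2) * ∑ a1, |q k1 a1 - 1 / (dA1 : ℝ)| := by
      intro k2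
      rw [← mul_add, ← Finset.sum_add_distrib]
      have h12 : (0:ℝ) ≤ 1/2 := by norm_num
      apply mul_le_mul_of_nonneg_left _ h12
      apply Finset.sum_le_sum
      intro a1 _
      have expand : |q k1 a1 - 1 / (dA1 : ℝ)|
          = ∑ _a2 : Fin dA2, |q k1 a1 / (dA2 : ℝ) - 1 / ((dA1 : ℝ) * dA2)| := by
        rw [Finset.sum_const, Finset.card_univ, Fintype.card_fin, nsmul_eq_mul]
        have e1 : q k1 a1 / (dA2 : ℝ) - 1 / ((dA1 : ℝ) * dA2)
            = (q k1 a1 - 1 / (dA1 : ℝ)) / (dA2 : ℝ) := by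
          field_simp
        rw [e1, abs_div, abs_of_pos hA2']
        field_simp
      rw [expand, ← Finset.sum_add_distrib]
      apply Finset.sum_le_sum
      intro a2 _
      exact abs_sub_le _ _ _
    -- average the first part over k2
    have avg : (1 / (t2 : ℝ)) * ∑ k2, (1 / 2) * ∑ a1, ∑ a2,
        |P k1 k2 a1 a2 - q k1 a1 / (dA2 : ℝ)| ≤ ε2 := by
      have swap : (1 / (t2 : ℝ)) * ∑ k2, (1 / 2) * ∑ a1, ∑ a2,
          |P k1 k2 a1 a2 - q k1 a1 / (dA2 : ℝ)|
          = ∑ a1, ((1 / (t2 : ℝ)) * ∑ k2, (1 / 2) * ∑ a2,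
          |P k1 k2 a1 a2 - q k1 a1 / (dA2 : ℝ)|) := by
        simp only [Finset.mul_sum]
        rw [Finset.sum_comm]
      rw [swap]
      have bnd : ∀ a1, (1 / (t2 : ℝ)) * ∑ k2, (1 / 2) * ∑ a2,
          |P k1 k2 a1 a2 - q k1 a1 / (dA2 : ℝ)| ≤ ε2 * q k1 a1 := by
        intro a1
        exact murC U2 ε2 hMUR2 (v k1 a1)
      calc ∑ a1, ((1 / (t2 : ℝ)) * ∑ k2, (1 / 2) * ∑ a2,
          |P k1 k2 a1 a2 - q k1 a1 / (dA2 : ℝ)|)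
          ≤ ∑ a1, ε2 * q k1 a1 := Finset.sum_le_sum fun a1 _ => bnd a1
        _ = ε2 := by rw [← Finset.mul_sum, hqsum k1, mul_one]
    -- combine
    calc (1 / (t2 : ℝ)) * ∑ k2, (1 / 2) * ∑ a1, ∑ a2,
        |P k1 k2 a1 a2 - 1 / ((dA1 : ℝ) * dA2)|
        ≤ (1 / (t2 : ℝ)) * ∑ k2, (((1 / 2) * ∑ a1, ∑ a2,
            |P k1 k2 a1 a2 - q k1 a1 / (dA2 : ℝ)|)
          + (1 / 2) * ∑ a1, |q k1 a1 - 1 / (dA1 : ℝ)|) := by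
          apply mul_le_mul_of_nonneg_left _ (by positivity)
          exact Finset.sum_le_sum fun k2 _ => tri k2
      _ = ((1 / (t2 : ℝ)) * ∑ k2, (1 / 2) * ∑ a1, ∑ a2,
            |P k1 k2 a1 a2 - q k1 a1 / (dA2 : ℝ)|)
          + (1 / 2) * ∑ a1, |q k1 a1 - 1 / (dA1 : ℝ)| := by
          rw [Finset.sum_add_distrib, mul_add, Finset.sum_const, Finset.card_univ,
            Fintype.card_fin, nsmul_eq_mul]
          congr 1
          field_simp
          refine Finset.sum_congr rfl fun x _ => ?_
          congr 1
          ring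
      _ ≤ ε2 + (1 / 2) * ∑ a1, |q k1 a1 - 1 / (dA1 : ℝ)| := by
          exact add_le_add_left avg _
  -- assemble
  have split : (1 / ((t1 : ℝ) * t2)) * ∑ k1, ∑ k2, (1 / 2) * ∑ a1, ∑ a2,
      |P k1 k2 a1 a2 - 1 / ((dA1 : ℝ) * dA2)|
      = (1 / (t1 : ℝ)) * ∑ k1, ((1 / (t2 : ℝ)) * ∑ k2, (1 / 2) * ∑ a1, ∑ a2,
      |P k1 k2 a1 a2 - 1 / ((dA1 : ℝ) * dA2)|) := by
    rw [Finset.mul_sum, Finset.mul_sum]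
    refine Finset.sum_congr rfl fun k1 _ => ?_
    rw [← mul_assoc]
    congr 1
    field_simp
  rw [split]
  have hmur1 := hMUR1 ψ hψ
  calc (1 / (t1 : ℝ)) * ∑ k1, ((1 / (t2 : ℝ)) * ∑ k2, (1 / 2) * ∑ a1, ∑ a2,
      |P k1 k2 a1 a2 - 1 / ((dA1 : ℝ) * dA2)|)
      ≤ (1 / (t1 : ℝ)) * ∑ k1, (ε2 + (1 / 2) * ∑ a1, |q k1 a1 - 1 / (dA1 : ℝ)|) := by
        apply mul_le_mul_of_nonneg_left _ (by positivity)
        exact Finset.sum_le_sum fun k1 _ => step k1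
    _ = ε2 + (1 / (t1 : ℝ)) * ∑ k1, (1 / 2) * ∑ a1, |q k1 a1 - 1 / (dA1 : ℝ)| := by
        rw [Finset.sum_add_distrib, mul_add, Finset.sum_const, Finset.card_univ,
          Fintype.card_fin, nsmul_eq_mul]
        congr 1
        field_simp
    _ ≤ ε2 + ε1 := by
        apply add_le_add_right
        have : (1 / (t1 : ℝ)) * ∑ k1, (1 / 2) * ∑ a1, |q k1 a1 - 1 / (dA1 : ℝ)|
            = (1 / (t1 : ℝ)) * ∑ k1, (1 / 2) * ∑ a1 : Fin dA1,
            |(∑ b1 : Fin dA2 × Fin dB2, ‖(U1 k1).mulVec ψ (a1, b1)‖ ^ 2)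
              - 1 / (dA1 : ℝ)| := rfl
        rw [this]
        exact hmur1
    _ = ε1 + ε2 := by ring
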